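/- Let W be a real Banach space and ω : W × W → ℝ a continuous alternating bilinear form such that the induced map ω♭ : W → W*, w ↦ ω(w,−), is injective (a weak symplectic form). Call a smooth function f : W → ℝ Hamiltonian if there exists a smooth map X_f : W → W such that Df(x)(v) = ω(X_f(x), v) for all x, v ∈ W; by injectivity of ω♭ such X_f is unique. Then: (i) constant functions are Hamiltonian and the set C_ω of Hamiltonian functions is closed under ℝ-linear combinations and pointwise products; (ii) for f, g ∈ C_ω the bracket {f,g}(x) := ω(X_f(x), X_g(x)) is again a Hamiltonian function; and (iii) (C_ω, {·,·}) is a Poisson algebra: the bracket is ℝ-bilinear, antisymmetric, satisfies the Leibniz rule {f, g·h} = {f,g}·h + g·{f,h}, and satisfies the Jacobi identity. -/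

import Mathlib

/-- A function `f` on a weak symplectic Banach space `(W, ω)` is Hamiltonian if it is
smooth and admits a smooth Hamiltonian vector field `X_f` with
`Df(x)(v) = ω(X_f(x), v)`. -/
def IsHamiltonian {W : Type*} [NormedAddCommGroup W] [NormedSpace ℝ W]
    (ω : W →L[ℝ] W →L[ℝ] ℝ) (f : W → ℝ) : Prop :=
  ContDiff ℝ (⊤ : ℕ∞) f ∧
    ∃ X : W → W, ContDiff ℝ (⊤ : ℕ∞) X ∧ ∀ x v : W, fderiv ℝ f x v = ω (X x) v

open Classical in
/-- The Hamiltonian vector field of `f` (a choice of witness; it is unique when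
`ω♭` is injective). -/
noncomputable def hamVF {W : Type*} [NormedAddCommGroup W] [NormedSpace ℝ W]
    (ω : W →L[ℝ] W →L[ℝ] ℝ) (f : W → ℝ) : W → W :=
  if h : ∃ X : W → W, ContDiff ℝ (⊤ : ℕ∞) X ∧ ∀ x v : W, fderiv ℝ f x v = ω (X x) v
  then h.choose else 0

/-- The Poisson bracket `{f,g}(x) = ω(X_f(x), X_g(x))`. -/
noncomputable def pBracket {W : Type*} [NormedAddCommGroup W] [NormedSpace ℝ W]
    (ω : W →L[ℝ] W →L[ℝ] ℝ) (f g : W → ℝ) : W → ℝ :=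
  fun x => ω (hamVF ω f x) (hamVF ω g x)

section Aux
variable {W : Type*} [NormedAddCommGroup W] [NormedSpace ℝ W]
variable {ω : W →L[ℝ] W →L[ℝ] ℝ} {f g h : W → ℝ}

lemma omega_antisym (halt : ∀ w : W, ω w w = 0) (a b : W) : ω a b = - ω b a := by
  have hh := halt (a + b)
  simp only [map_add, ContinuousLinearMap.add_apply, halt] at hh
  linarith

lemma hamVF_spec (hf : IsHamiltonian ω f) :
    ContDiff ℝ (⊤ : ℕ∞) (hamVF ω f) ∧ ∀ x v : W, fderiv ℝ f x v = ω (hamVF ω f x) v := by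
  rw [hamVF, dif_pos hf.2]
  exact hf.2.choose_spec

lemma hamVF_eq (hinj : Function.Injective (fun w : W => ω w)) (hf : IsHamiltonian ω f)
    {X : W → W} (hX : ∀ x v : W, fderiv ℝ f x v = ω (X x) v) (x : W) :
    hamVF ω f x = X x := by
  apply hinj
  ext v
  rw [← (hamVF_spec hf).2 x v, hX]

lemma hasFDerivAt_of_ham (hf : IsHamiltonian ω f) (x : W) :
    HasFDerivAt f (ω (hamVF ω f x)) x := by
  have h1 : fderiv ℝ f x = ω (hamVF ω f x) := ContinuousLinearMap.ext ((hamVF_spec hf).2 x)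
  exact h1 ▸ ((hf.1.differentiable (by simp)) x).hasFDerivAt

/-- symmetry of the second derivative, reformulated via `ω` and `X_f`. -/
lemma symm_snd (hf : IsHamiltonian ω f) (x u v : W) :
    ω (fderiv ℝ (hamVF ω f) x u) v = ω (fderiv ℝ (hamVF ω f) x v) u := by
  obtain ⟨hX, hspec⟩ := hamVF_spec hf
  have hX' : HasFDerivAt (fun y => ω (hamVF ω f y)) (ω.comp (fderiv ℝ (hamVF ω f) x)) x :=
    ω.hasFDerivAt.comp x (((hX.differentiable (by simp)) x).hasFDerivAt)
  have := second_derivative_symmetric (fun y => hasFDerivAt_of_ham hf y) hX' u v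
  simpa using this

lemma ham_const (c : ℝ) : IsHamiltonian ω (fun _ : W => c) := by
  refine ⟨contDiff_const, 0, contDiff_const, fun x v => ?_⟩
  simp [fderiv_const]

lemma lin_field (hf : IsHamiltonian ω f) (hg : IsHamiltonian ω g) (c : ℝ) (x v : W) :
    fderiv ℝ (c • f + g) x v = ω (c • hamVF ω f x + hamVF ω g x) v := by
  have hd : HasFDerivAt (c • f + g) (c • ω (hamVF ω f x) + ω (hamVF ω g x)) x :=
    ((hasFDerivAt_of_ham hf x).const_smul c).add (hasFDerivAt_of_ham hg x)
  rw [hd.fderiv]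
  simp [smul_eq_mul]

lemma ham_lin (hf : IsHamiltonian ω f) (hg : IsHamiltonian ω g) (c : ℝ) :
    IsHamiltonian ω (c • f + g) :=
  ⟨(hf.1.const_smul c).add hg.1,
    fun x => c • hamVF ω f x + hamVF ω g x,
    ((hamVF_spec hf).1.const_smul c).add (hamVF_spec hg).1,
    lin_field hf hg c⟩

lemma mul_field (hf : IsHamiltonian ω f) (hg : IsHamiltonian ω g) (x v : W) :
    fderiv ℝ (f * g) x v = ω (f x • hamVF ω g x + g x • hamVF ω f x) v := by
  have hd : HasFDerivAt (f * g) (f x • ω (hamVF ω g x) + g x • ω (hamVF ω f x)) x :=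
    (hasFDerivAt_of_ham hf x).mul (hasFDerivAt_of_ham hg x)
  rw [hd.fderiv]
  simp [smul_eq_mul]

lemma ham_mul (hf : IsHamiltonian ω f) (hg : IsHamiltonian ω g) :
    IsHamiltonian ω (f * g) :=
  ⟨hf.1.mul hg.1,
    fun x => f x • hamVF ω g x + g x • hamVF ω f x,
    (hf.1.smul (hamVF_spec hg).1).add (hg.1.smul (hamVF_spec hf).1),
    mul_field hf hg⟩

lemma bracket_field (halt : ∀ w : W, ω w w = 0)
    (hf : IsHamiltonian ω f) (hg : IsHamiltonian ω g) (x v : W) :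
    fderiv ℝ (pBracket ω f g) x v =
      ω (fderiv ℝ (hamVF ω f) x (hamVF ω g x) - fderiv ℝ (hamVF ω g) x (hamVF ω f x)) v := by
  obtain ⟨hXf, _⟩ := hamVF_spec hf
  obtain ⟨hXg, _⟩ := hamVF_spec hg
  have hc : HasFDerivAt (fun y => ω (hamVF ω f y)) (ω.comp (fderiv ℝ (hamVF ω f) x)) x :=
    ω.hasFDerivAt.comp x (((hXf.differentiable (by simp)) x).hasFDerivAt)
  have hu : HasFDerivAt (hamVF ω g) (fderiv ℝ (hamVF ω g) x) x :=
    ((hXg.differentiable (by simp)) x).hasFDerivAt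
  have hd := hc.clm_apply hu
  have : fderiv ℝ (pBracket ω f g) x =
      ((ω (hamVF ω f x)).comp (fderiv ℝ (hamVF ω g) x) +
        (ω.comp (fderiv ℝ (hamVF ω f) x)).flip (hamVF ω g x)) := hd.fderiv
  rw [this]
  simp only [ContinuousLinearMap.add_apply, ContinuousLinearMap.comp_apply,
    ContinuousLinearMap.flip_apply, map_sub, ContinuousLinearMap.sub_apply]
  have e1 : ω (hamVF ω f x) (fderiv ℝ (hamVF ω g) x v)
      = - ω (fderiv ℝ (hamVF ω g) x (hamVF ω f x)) v := by
    rw [omega_antisym halt, symm_snd hg]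
  have e2 : ω (fderiv ℝ (hamVF ω f) x v) (hamVF ω g x)
      = ω (fderiv ℝ (hamVF ω f) x (hamVF ω g x)) v := symm_snd hf x v (hamVF ω g x)
  rw [e1, e2]; ring

lemma ham_bracket (halt : ∀ w : W, ω w w = 0)
    (hf : IsHamiltonian ω f) (hg : IsHamiltonian ω g) :
    IsHamiltonian ω (pBracket ω f g) := by
  obtain ⟨hXf, _⟩ := hamVF_spec hf
  obtain ⟨hXg, _⟩ := hamVF_spec hg
  have hdXf : ContDiff ℝ (⊤ : ℕ∞) (fderiv ℝ (hamVF ω f)) := hXf.fderiv_right (by exact_mod_cast le_top)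
  have hdXg : ContDiff ℝ (⊤ : ℕ∞) (fderiv ℝ (hamVF ω g)) := hXg.fderiv_right (by exact_mod_cast le_top)
  refine ⟨?_, fun x => fderiv ℝ (hamVF ω f) x (hamVF ω g x) -
      fderiv ℝ (hamVF ω g) x (hamVF ω f x), ?_, bracket_field halt hf hg⟩
  · exact (ω.contDiff.comp hXf).clm_apply hXg
  · exact (hdXf.clm_apply hXg).sub (hdXg.clm_apply hXf)

end Aux

/-- On a real Banach space with a weak symplectic form `ω`, the set of Hamiltonian
functions is closed under constants, `ℝ`-linear combinations, products, and the
bracket `{f,g} = ω(X_f, X_g)`, and the latter makes it a Poisson algebra. -/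
theorem hamiltonian_poisson_algebra {W : Type*} [NormedAddCommGroup W] [NormedSpace ℝ W]
    [CompleteSpace W]
    (ω : W →L[ℝ] W →L[ℝ] ℝ)
    (halt : ∀ w : W, ω w w = 0)
    (hinj : Function.Injective (fun w : W => ω w)) :
    -- (i) constants are Hamiltonian; closure under linear combinations and products
    ((∀ c : ℝ, IsHamiltonian ω (fun _ => c)) ∧
      (∀ (f g : W → ℝ) (c : ℝ), IsHamiltonian ω f → IsHamiltonian ω g →
        IsHamiltonian ω (c • f + g) ∧ IsHamiltonian ω (f * g))) ∧
    -- (ii) the bracket of Hamiltonian functions is Hamiltonian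
    (∀ f g : W → ℝ, IsHamiltonian ω f → IsHamiltonian ω g →
      IsHamiltonian ω (pBracket ω f g)) ∧
    -- (iii) Poisson algebra structure
    ((∀ (f f' g : W → ℝ) (c : ℝ), IsHamiltonian ω f → IsHamiltonian ω f' →
        IsHamiltonian ω g →
        pBracket ω (c • f + f') g = c • pBracket ω f g + pBracket ω f' g) ∧
      (∀ (f g g' : W → ℝ) (c : ℝ), IsHamiltonian ω f → IsHamiltonian ω g →
        IsHamiltonian ω g' →
        pBracket ω f (c • g + g') = c • pBracket ω f g + pBracket ω f g') ∧
      (∀ f g : W → ℝ, IsHamiltonian ω f → IsHamiltonian ω g →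
        pBracket ω f g = -pBracket ω g f) ∧
      (∀ f g h : W → ℝ, IsHamiltonian ω f → IsHamiltonian ω g → IsHamiltonian ω h →
        pBracket ω f (g * h) = pBracket ω f g * h + g * pBracket ω f h) ∧
      (∀ f g h : W → ℝ, IsHamiltonian ω f → IsHamiltonian ω g → IsHamiltonian ω h →
        pBracket ω f (pBracket ω g h) + pBracket ω g (pBracket ω h f) +
          pBracket ω h (pBracket ω f g) = 0)) := by
  have hVFlin : ∀ (f g : W → ℝ) (c : ℝ), IsHamiltonian ω f → IsHamiltonian ω g →
      ∀ x, hamVF ω (c • f + g) x = c • hamVF ω f x + hamVF ω g x := fun f g c hf hg =>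
    hamVF_eq hinj (ham_lin hf hg c) (lin_field hf hg c)
  have hVFmul : ∀ (f g : W → ℝ), IsHamiltonian ω f → IsHamiltonian ω g →
      ∀ x, hamVF ω (f * g) x = f x • hamVF ω g x + g x • hamVF ω f x := fun f g hf hg =>
    hamVF_eq hinj (ham_mul hf hg) (mul_field hf hg)
  have hVFbr : ∀ (f g : W → ℝ), IsHamiltonian ω f → IsHamiltonian ω g →
      ∀ x, hamVF ω (pBracket ω f g) x =
        fderiv ℝ (hamVF ω f) x (hamVF ω g x) - fderiv ℝ (hamVF ω g) x (hamVF ω f x) :=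
    fun f g hf hg =>
      hamVF_eq hinj (ham_bracket halt hf hg) (bracket_field halt hf hg)
  refine ⟨⟨ham_const, fun f g c hf hg => ⟨ham_lin hf hg c, ham_mul hf hg⟩⟩,
    fun f g hf hg => ham_bracket halt hf hg, ?_, ?_, ?_, ?_, ?_⟩
  · intro f f' g c hf hf' hg
    funext x
    simp only [pBracket, hVFlin f f' c hf hf' x, map_add, map_smul,
      ContinuousLinearMap.add_apply, ContinuousLinearMap.smul_apply, Pi.add_apply,
      Pi.smul_apply, smul_eq_mul]
  · intro f g g' c hf hg hg'
    funext x
    simp only [pBracket, hVFlin g g' c hg hg' x, map_add, map_smul, Pi.add_apply,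
      Pi.smul_apply, smul_eq_mul]
  · intro f g hf hg
    funext x
    simpa [pBracket] using omega_antisym halt (hamVF ω f x) (hamVF ω g x)
  · intro f g h hf hg hh
    funext x
    simp only [pBracket, hVFmul g h hg hh x, map_add, map_smul, Pi.add_apply, Pi.mul_apply,
      Pi.smul_apply, smul_eq_mul]
    ring
  · intro f g h hf hg hh
    funext x
    simp only [pBracket, Pi.add_apply, Pi.zero_apply,
      hVFbr g h hg hh x, hVFbr h f hh hf x, hVFbr f g hf hg x, map_sub,
      ContinuousLinearMap.sub_apply]
    set a := hamVF ω f x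
    set b := hamVF ω g x
    set c := hamVF ω h x
    set A := fderiv ℝ (hamVF ω f) x
    set B := fderiv ℝ (hamVF ω g) x
    set C := fderiv ℝ (hamVF ω h) x
    have e1 : ω a (B c) = ω c (B a) := by
      rw [omega_antisym halt a (B c), symm_snd hg, omega_antisym halt (B a) c]; ring_nf
    have e2 : ω b (C a) = ω a (C b) := by
      rw [omega_antisym halt b (C a), symm_snd hh, omega_antisym halt (C b) a]; ring_nf
    have e3 : ω c (A b) = ω b (A c) := by
      rw [omega_antisym halt c (A b), symm_snd hf, omega_antisym halt (A c) b]; ring_nf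
    linarith
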